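/- For all real x, x': ∫₀¹ ((1−ξ)x + ξx')⁷ dξ = ((x'+x)/2)·((x'²+x²)/2)·((x'⁴+x⁴)/2). Hence the reduced-degree midpoint method for the octic oscillator coincides with the averaged vector field method. -/

import Mathlib

/-- For all real x, x': ∫₀¹ ((1−ξ)x + ξx')⁷ dξ = ((x'+x)/2)((x'²+x²)/2)((x'⁴+x⁴)/2). -/
theorem avf_septic_integral (x x' : ℝ) :
    (∫ ξ in (0:ℝ)..1, ((1 - ξ) * x + ξ * x') ^ 7)
      = ((x' + x) / 2) * ((x' ^ 2 + x ^ 2) / 2) * ((x' ^ 4 + x ^ 4) / 2) := by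
  rcases eq_or_ne x' x with h | h
  · simp only [show ∀ ξ : ℝ, ((1 - ξ) * x + ξ * x') ^ 7 = x ^ 7 from
      fun ξ => by rw [h]; ring]
    rw [h]
    simp
    ring
  · have hd : ∀ ξ ∈ Set.uIcc (0:ℝ) 1,
        HasDerivAt (fun t : ℝ => ((1 - t) * x + t * x') ^ 8 / (8 * (x' - x)))
          (((1 - ξ) * x + ξ * x') ^ 7) ξ := by
      intro ξ _
      have hg : HasDerivAt (fun t : ℝ => (1 - t) * x + t * x') (x' - x) ξ := by
        have h1 := ((hasDerivAt_id ξ).const_sub 1).mul_const x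
        have h2 := (hasDerivAt_id ξ).mul_const x'
        refine (h1.add h2).congr_deriv ?_
        ring
      have := (hg.pow 8).div_const (8 * (x' - x))
      refine this.congr_deriv ?_
      have hxx : x' - x ≠ 0 := sub_ne_zero.mpr h
      field_simp
      ring
    rw [intervalIntegral.integral_eq_sub_of_hasDerivAt hd (by
      apply Continuous.intervalIntegrable; continuity)]
    have hxx : x' - x ≠ 0 := sub_ne_zero.mpr h
    field_simp
    ring
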